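/- Let w : ℝ → ℝ be measurable with |w(r)| ≤ C·(|r|^{2β} ∧ 1) for some 1/2 < β < 1, let u be a harmonic conjugate in ℍ of the Poisson extension of w, and define L = (1/π)∫_{−∞}^{∞} w(r)/r² dr (the integral converges absolutely). Then there exists C₁ = C₁(C,β) such that |∂_x u(x+iy) − L| ≤ C₁·y^{2β−1} for all 0 ≤ |x| ≤ y ≤ 1/2. -/

import Mathlib

open Set Filter MeasureTheory Real

section AuxConjDeriv

lemma integrable_comp_abs' {f : ℝ → ℝ} (hf : IntegrableOn f (Ioi 0)) :
    Integrable (fun x : ℝ => f |x|) := by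
  have hf' : IntegrableOn (fun x : ℝ => f |x|) (Ioi 0) :=
    hf.congr_fun (fun x hx => by rw [abs_of_pos hx]) measurableSet_Ioi
  have int_Iic : IntegrableOn (fun x : ℝ ↦ f |x|) (Iic 0) := by
    rw [← Measure.map_neg_eq_self (volume : Measure ℝ)]
    have m : MeasurableEmbedding fun x : ℝ => -x := (Homeomorph.neg ℝ).measurableEmbedding
    rw [m.integrableOn_map_iff]
    simp_rw [Function.comp_def, abs_neg, neg_preimage, neg_Iic, neg_zero]
    exact Iff.mpr integrableOn_Ici_iff_integrableOn_Ioi hf'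
  rw [← integrableOn_univ, ← Iic_union_Ioi (a := (0:ℝ))]
  exact integrableOn_union.mpr ⟨int_Iic, hf'⟩

lemma kb0 {x y r : ℝ} (hxy : |x| ≤ y) (hy : 0 < y) (hr : r ≠ 0) :
    |((r - x) ^ 2 - y ^ 2) / (((r - x) ^ 2 + y ^ 2) ^ 2)| ≤ 2 / r ^ 2 := by
  have hr2 : (0:ℝ) < r ^ 2 := by positivity
  have hx2 : x ^ 2 ≤ y ^ 2 := by nlinarith [sq_abs x, abs_nonneg x]
  rw [abs_div, abs_of_pos (by positivity : (0:ℝ) < ((r - x) ^ 2 + y ^ 2) ^ 2)]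
  have h1 : |(r - x) ^ 2 - y ^ 2| ≤ (r - x) ^ 2 + y ^ 2 := by
    rw [abs_le]; constructor <;> nlinarith
  have h2 : r ^ 2 ≤ 2 * ((r - x) ^ 2 + y ^ 2) := by nlinarith [sq_nonneg (r - 2*x)]
  rw [div_le_div_iff₀ (by positivity) hr2]
  nlinarith [sq_nonneg ((r - x) ^ 2 + y ^ 2)]

lemma kb1 {x y r : ℝ} (hxy : |x| ≤ y) (hy : 0 < y) (hr : r ≠ 0) :
    |((r - x) ^ 2 - y ^ 2) / (((r - x) ^ 2 + y ^ 2) ^ 2) - 1 / r ^ 2| ≤ 3 / r ^ 2 := by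
  have hr2 : (0:ℝ) < r ^ 2 := by positivity
  calc |((r - x) ^ 2 - y ^ 2) / (((r - x) ^ 2 + y ^ 2) ^ 2) - 1 / r ^ 2|
      ≤ |((r - x) ^ 2 - y ^ 2) / (((r - x) ^ 2 + y ^ 2) ^ 2)| + |1 / r ^ 2| := abs_sub _ _
    _ ≤ 2 / r ^ 2 + 1 / r ^ 2 := by
        gcongr
        · exact kb0 hxy hy hr
        · rw [abs_of_pos (by positivity)]
    _ = 3 / r ^ 2 := by ring

set_option maxHeartbeats 1000000 in
lemma kb2 {x y r : ℝ} (hxy : |x| ≤ y) (hy : 0 < y) (hr : r ≠ 0) :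
    |((r - x) ^ 2 - y ^ 2) / (((r - x) ^ 2 + y ^ 2) ^ 2) - 1 / r ^ 2| ≤ 26 * y / |r| ^ 3 := by
  have habs : (0:ℝ) < |r| := abs_pos.mpr hr
  have hr2 : (0:ℝ) < r ^ 2 := by positivity
  have hx2 : x ^ 2 ≤ y ^ 2 := by nlinarith [sq_abs x, abs_nonneg x]
  have hsq : |r| ^ 2 = r ^ 2 := sq_abs r
  rcases le_or_gt |r| (4 * y) with hle | hlt
  · refine (kb1 hxy hy hr).trans ?_
    rw [div_le_div_iff₀ hr2 (by positivity)]
    calc 3 * |r| ^ 3 = 3 * |r| * r ^ 2 := by rw [← hsq]; ring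
      _ ≤ 3 * (4 * y) * r ^ 2 := by nlinarith
      _ ≤ 26 * y * r ^ 2 := by nlinarith
  · have h4 : 4 * y ≤ |r| := le_of_lt hlt
    have hd : (0:ℝ) < (r - x) ^ 2 + y ^ 2 := by positivity
    have key : ((r - x) ^ 2 - y ^ 2) / (((r - x) ^ 2 + y ^ 2) ^ 2) - 1 / r ^ 2
        = (((r - x) ^ 2 - y ^ 2) * r ^ 2 - ((r - x) ^ 2 + y ^ 2) ^ 2)
          / (((r - x) ^ 2 + y ^ 2) ^ 2 * r ^ 2) := by
      field_simp
    rw [key, abs_div, abs_of_pos (by positivity : (0:ℝ) < ((r - x) ^ 2 + y ^ 2) ^ 2 * r ^ 2),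
      div_le_div_iff₀ (by positivity) (by positivity)]
    have hy2 : 16 * y ^ 2 ≤ r ^ 2 := by
      nlinarith [mul_le_mul h4 h4 (by positivity : (0:ℝ) ≤ 4 * y) (abs_nonneg r)]
    have hs2 : 9 / 16 * r ^ 2 ≤ (r - x) ^ 2 := by
      have hs : 3 / 4 * |r| ≤ |r - x| := by
        have h1 : |r| ≤ |r - x| + |x| := by
          calc |r| = |r - x + x| := by ring_nf
            _ ≤ |r - x| + |x| := abs_add_le _ _
        have h2 : |x| ≤ |r| / 4 := by linarith
        linarith
      nlinarith [sq_abs (r - x), abs_nonneg (r - x)]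
    have hsub : (r - x) ^ 2 ≤ 17 / 8 * r ^ 2 := by
      nlinarith [sq_nonneg (r + x)]
    have hya : y ≤ |r| / 4 := by linarith
    have hyr : y ^ 2 ≤ y * (|r| / 4) := by nlinarith
    have hx2r : |2 * x * r - x ^ 2| ≤ 9 / 4 * (y * |r|) := by
      calc |2 * x * r - x ^ 2| ≤ |2 * x * r| + |x ^ 2| := abs_sub _ _
        _ = 2 * (|x| * |r|) + x ^ 2 := by
            rw [abs_mul, abs_mul, abs_pow, sq_abs]; simp; ring
        _ ≤ 2 * (y * |r|) + y * (|r| / 4) := by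
            gcongr
            · linarith [hx2, hyr]
        _ = 9 / 4 * (y * |r|) := by ring
    have u1 : |(r - x) ^ 2 * (2 * x * r - x ^ 2)| ≤ 153 / 32 * (y * (r ^ 2 * |r|)) := by
      rw [abs_mul, abs_of_nonneg (sq_nonneg (r - x))]
      calc (r - x) ^ 2 * |2 * x * r - x ^ 2| ≤ (17 / 8 * r ^ 2) * (9 / 4 * (y * |r|)) :=
          mul_le_mul hsub hx2r (abs_nonneg _) (by positivity)
        _ = 153 / 32 * (y * (r ^ 2 * |r|)) := by ring
    have u2 : |y ^ 2 * r ^ 2| ≤ 1 / 4 * (y * (r ^ 2 * |r|)) := by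
      rw [abs_of_nonneg (by positivity)]
      calc y ^ 2 * r ^ 2 ≤ (y * (|r| / 4)) * r ^ 2 := mul_le_mul_of_nonneg_right hyr hr2.le
        _ = 1 / 4 * (y * (r ^ 2 * |r|)) := by ring
    have u3 : |2 * (r - x) ^ 2 * y ^ 2| ≤ 17 / 16 * (y * (r ^ 2 * |r|)) := by
      rw [abs_of_nonneg (by positivity)]
      have q2 : (r - x) ^ 2 * y ^ 2 ≤ (17 / 8 * r ^ 2) * (y * (|r| / 4)) :=
        mul_le_mul hsub hyr (by positivity) (by positivity)
      nlinarith [q2]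
    have u4 : |y ^ 4| ≤ 1 / 64 * (y * (r ^ 2 * |r|)) := by
      rw [abs_of_nonneg (by positivity)]
      calc y ^ 4 = y * (y * (y * y)) := by ring
        _ ≤ y * ((|r| / 4) * ((|r| / 4) * (|r| / 4))) := by gcongr
        _ = 1 / 64 * (y * (|r| ^ 2 * |r|)) := by ring
        _ = 1 / 64 * (y * (r ^ 2 * |r|)) := by rw [hsq]
    have hN : |((r - x) ^ 2 - y ^ 2) * r ^ 2 - ((r - x) ^ 2 + y ^ 2) ^ 2|
        ≤ 7 * (y * (r ^ 2 * |r|)) := by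
      have e : ((r - x) ^ 2 - y ^ 2) * r ^ 2 - ((r - x) ^ 2 + y ^ 2) ^ 2
          = (r - x) ^ 2 * (2 * x * r - x ^ 2) - y ^ 2 * r ^ 2
            - 2 * (r - x) ^ 2 * y ^ 2 - y ^ 4 := by ring
      rw [e]
      have tri : |(r - x) ^ 2 * (2 * x * r - x ^ 2) - y ^ 2 * r ^ 2
            - 2 * (r - x) ^ 2 * y ^ 2 - y ^ 4|
          ≤ |(r - x) ^ 2 * (2 * x * r - x ^ 2)| + |y ^ 2 * r ^ 2|
            + |2 * (r - x) ^ 2 * y ^ 2| + |y ^ 4| := by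
        calc |(r - x) ^ 2 * (2 * x * r - x ^ 2) - y ^ 2 * r ^ 2 - 2 * (r - x) ^ 2 * y ^ 2 - y ^ 4|
            ≤ |(r - x) ^ 2 * (2 * x * r - x ^ 2) - y ^ 2 * r ^ 2 - 2 * (r - x) ^ 2 * y ^ 2| + |y ^ 4| :=
              abs_sub _ _
          _ ≤ |(r - x) ^ 2 * (2 * x * r - x ^ 2) - y ^ 2 * r ^ 2| + |2 * (r - x) ^ 2 * y ^ 2| + |y ^ 4| := by
              gcongr; exact abs_sub _ _
          _ ≤ |(r - x) ^ 2 * (2 * x * r - x ^ 2)| + |y ^ 2 * r ^ 2| + |2 * (r - x) ^ 2 * y ^ 2| + |y ^ 4| := by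
              gcongr; exact abs_sub _ _
      have hpos : (0:ℝ) ≤ y * (r ^ 2 * |r|) := by positivity
      linarith
    have h6 : |r| ^ 3 = r ^ 2 * |r| := by rw [← hsq]; ring
    have hs4 : 81 / 256 * (r ^ 2 * r ^ 2) ≤ ((r - x) ^ 2 + y ^ 2) ^ 2 := by
      nlinarith [sq_nonneg y, sq_nonneg (r - x), hs2, sq_nonneg ((r - x) ^ 2 - 9 / 16 * r ^ 2)]
    calc |((r - x) ^ 2 - y ^ 2) * r ^ 2 - ((r - x) ^ 2 + y ^ 2) ^ 2| * |r| ^ 3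
        ≤ (7 * (y * (r ^ 2 * |r|))) * (r ^ 2 * |r|) := by
          rw [h6]; exact mul_le_mul_of_nonneg_right hN (by positivity)
      _ = 7 * y * (r ^ 2 * r ^ 2 * (|r| * |r|)) := by ring
      _ = 7 * y * (r ^ 2 * r ^ 2 * r ^ 2) := by rw [show |r| * |r| = |r| ^ 2 by ring, hsq]
      _ ≤ 26 * y * (81 / 256 * (r ^ 2 * r ^ 2) * r ^ 2) := by
          have hpos : (0:ℝ) ≤ y * (r ^ 2 * r ^ 2 * r ^ 2) := by positivity
          linarith
      _ ≤ 26 * y * (((r - x) ^ 2 + y ^ 2) ^ 2 * r ^ 2) := by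
          have q := mul_le_mul_of_nonneg_right hs4 hr2.le
          have q2 := mul_le_mul_of_nonneg_left q (by positivity : (0:ℝ) ≤ 26 * y)
          calc 26 * y * (81 / 256 * (r ^ 2 * r ^ 2) * r ^ 2)
              = 26 * y * (81 / 256 * (r ^ 2 * r ^ 2) * r ^ 2) := rfl
            _ ≤ 26 * y * (((r - x) ^ 2 + y ^ 2) ^ 2 * r ^ 2) := q2

lemma meas_min_rpow (p q : ℝ) : Measurable (fun t : ℝ => min (t ^ p) (t ^ q)) := by
  measurability

lemma int_f2 {p q : ℝ} (hp : -1 < p) (hq : q < -1) :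
    IntegrableOn (fun t : ℝ => min (t ^ p) (t ^ q)) (Ioi 0) := by
  have h1 : IntegrableOn (fun t : ℝ => min (t ^ p) (t ^ q)) (Ioc 0 1) := by
    have hi : IntegrableOn (fun t : ℝ => t ^ p) (Ioc 0 1) := by
      have := intervalIntegral.intervalIntegrable_rpow' (a := 0) (b := 1) hp
      rwa [intervalIntegrable_iff_integrableOn_Ioc_of_le zero_le_one] at this
    refine hi.mono' ((meas_min_rpow p q).aestronglyMeasurable) ?_
    refine (ae_restrict_iff' measurableSet_Ioc).mpr (ae_of_all _ fun t ht => ?_)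
    rw [Real.norm_eq_abs, abs_of_nonneg (le_min (Real.rpow_nonneg ht.1.le _) (Real.rpow_nonneg ht.1.le _))]
    exact min_le_left _ _
  have h2 : IntegrableOn (fun t : ℝ => min (t ^ p) (t ^ q)) (Ioi 1) := by
    refine (integrableOn_Ioi_rpow_of_lt hq one_pos).mono' ((meas_min_rpow p q).aestronglyMeasurable) ?_
    refine (ae_restrict_iff' measurableSet_Ioi).mpr (ae_of_all _ fun t ht => ?_)
    have ht0 : (0:ℝ) < t := lt_trans one_pos ht
    rw [Real.norm_eq_abs, abs_of_nonneg (le_min (Real.rpow_nonneg ht0.le _) (Real.rpow_nonneg ht0.le _))]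
    exact min_le_right _ _
  rw [← Ioc_union_Ioi_eq_Ioi (zero_le_one (α := ℝ))]
  exact integrableOn_union.mpr ⟨h1, h2⟩

lemma int_f1 {q y : ℝ} (hq1 : -2 < q) (hq : q < -1) (hy : 0 < y) :
    IntegrableOn (fun t : ℝ => t ^ q * min t y) (Ioi 0) := by
  have hmeas : Measurable (fun t : ℝ => t ^ q * min t y) := by measurability
  have h1 : IntegrableOn (fun t : ℝ => t ^ q * min t y) (Ioc 0 y) := by
    have hi : IntegrableOn (fun t : ℝ => t ^ (q + 1)) (Ioc 0 y) := by
      have := intervalIntegral.intervalIntegrable_rpow' (a := 0) (b := y) (by linarith : (-1:ℝ) < q + 1)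
      rwa [intervalIntegrable_iff_integrableOn_Ioc_of_le hy.le] at this
    refine hi.mono' hmeas.aestronglyMeasurable ?_
    refine (ae_restrict_iff' measurableSet_Ioc).mpr (ae_of_all _ fun t ht => ?_)
    have ht0 : (0:ℝ) < t := ht.1
    rw [Real.norm_eq_abs, abs_of_nonneg (by positivity), min_eq_left ht.2,
      ← Real.rpow_add_one ht0.ne' q]
  have h2 : IntegrableOn (fun t : ℝ => t ^ q * min t y) (Ioi y) := by
    refine ((integrableOn_Ioi_rpow_of_lt hq hy).mul_const y).mono' hmeas.aestronglyMeasurable ?_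
    refine (ae_restrict_iff' measurableSet_Ioi).mpr (ae_of_all _ fun t ht => ?_)
    have ht0 : (0:ℝ) < t := lt_trans hy ht
    rw [Real.norm_eq_abs, abs_of_nonneg (by positivity), min_eq_right (le_of_lt ht)]
  rw [← Ioc_union_Ioi_eq_Ioi hy.le]
  exact integrableOn_union.mpr ⟨h1, h2⟩

lemma int_f1_val {β y : ℝ} (hβ0 : 1/2 < β) (hβ : β < 1) (hy : 0 < y) :
    ∫ t in Ioi (0:ℝ), t ^ (2*β - 3) * min t y
      = (1/(2*β - 1) + 1/(2 - 2*β)) * y ^ (2*β - 1) := by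
  have hq1 : (-2:ℝ) < 2*β - 3 := by linarith
  have hq : (2*β - 3 : ℝ) < -1 := by linarith
  have h1 := int_f1 (y := y) hq1 hq hy
  rw [← Ioc_union_Ioi_eq_Ioi hy.le] at h1 ⊢
  rw [setIntegral_union (Ioc_disjoint_Ioi le_rfl) measurableSet_Ioi
    (h1.mono_set subset_union_left) (h1.mono_set subset_union_right)]
  have e1 : ∫ t in Ioc (0:ℝ) y, t ^ (2*β - 3) * min t y
      = ∫ t in Ioc (0:ℝ) y, t ^ (2*β - 2) := by
    refine setIntegral_congr_fun measurableSet_Ioc (fun t ht => ?_)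
    rw [min_eq_left ht.2, ← Real.rpow_add_one (ne_of_gt ht.1)]
    congr 1; ring
  have e2 : ∫ t in Ioi y, t ^ (2*β - 3) * min t y
      = y * ∫ t in Ioi y, t ^ (2*β - 3) := by
    rw [← integral_const_mul]
    refine setIntegral_congr_fun measurableSet_Ioi (fun t ht => ?_)
    rw [min_eq_right (le_of_lt ht)]; ring
  rw [e1, e2, integral_Ioi_rpow_of_lt hq hy,
    ← intervalIntegral.integral_of_le hy.le, integral_rpow (Or.inl (by linarith : (-1:ℝ) < 2*β-2))]
  rw [Real.zero_rpow (by norm_num; intro h; linarith : (2*β - 2 + 1 : ℝ) ≠ 0)]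
  have : (2*β - 3 + 1 : ℝ) = 2*β - 2 := by ring
  rw [this]
  have hy1 : y ^ (2*β - 2 + 1 : ℝ) = y ^ (2*β - 2 : ℝ) * y := Real.rpow_add_one hy.ne' _
  have hy2 : (2*β - 2 + 1 : ℝ) = 2*β - 1 := by ring
  rw [← hy2, hy1]
  have hb1 : (2*β - 2 + 1 : ℝ) ≠ 0 := by rw [hy2]; intro h; linarith
  have hb2 : (2 - 2*β : ℝ) ≠ 0 := by intro h; linarith
  have hb3 : (2*β - 2 : ℝ) ≠ 0 := by intro h; linarith
  generalize y ^ (2*β - 2 : ℝ) = A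
  field_simp
  rw [show (1:ℝ) - β = -(β - 1) by ring, div_neg]; ring

lemma ptw {C β x y : ℝ} (hC : 0 < C) (hβ0 : 1/2 < β) (hβ : β < 1) {w : ℝ → ℝ}
    (hbound : ∀ r : ℝ, |w r| ≤ C * min (|r| ^ (2 * β)) 1) (hw0 : w 0 = 0)
    (hxy : |x| ≤ y) (hy : 0 < y) (r : ℝ) :
    |((r - x) ^ 2 - y ^ 2) / (((r - x) ^ 2 + y ^ 2) ^ 2) * w r - w r / r ^ 2|
      ≤ 26 * C * (|r| ^ (2*β - 3) * min |r| y) := by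
  rcases eq_or_ne r 0 with rfl | hr
  · have h0 : ((0:ℝ)) ^ (2*β - 3 : ℝ) = 0 := Real.zero_rpow (by intro h; linarith)
    simp [hw0, h0]
  · have habsr : (0:ℝ) < |r| := abs_pos.mpr hr
    have hr2 : (0:ℝ) < r ^ 2 := by positivity
    have hfac : ((r - x) ^ 2 - y ^ 2) / (((r - x) ^ 2 + y ^ 2) ^ 2) * w r - w r / r ^ 2
        = (((r - x) ^ 2 - y ^ 2) / (((r - x) ^ 2 + y ^ 2) ^ 2) - 1 / r ^ 2) * w r := by ring
    rw [hfac, abs_mul]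
    have hwr : |w r| ≤ C * |r| ^ (2 * β) := by
      refine (hbound r).trans (mul_le_mul_of_nonneg_left (min_le_left _ _) hC.le)
    have e3 : |r| ^ (2 * β) = |r| ^ (2*β - 3) * |r| ^ (3:ℕ) := by
      rw [← Real.rpow_natCast |r| 3, ← Real.rpow_add habsr]
      congr 1; push_cast; ring
    have hcube : |r| ^ (3:ℕ) / r ^ 2 = |r| := by
      rw [show |r| ^ (3:ℕ) = |r| * |r| ^ 2 by ring, sq_abs]
      field_simp
    rcases le_total |r| y with hcase | hcase
    · rw [min_eq_left hcase]
      calc |((r - x) ^ 2 - y ^ 2) / (((r - x) ^ 2 + y ^ 2) ^ 2) - 1 / r ^ 2| * |w r|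
          ≤ (3 / r ^ 2) * (C * |r| ^ (2 * β)) :=
            mul_le_mul (kb1 hxy hy hr) hwr (abs_nonneg _) (by positivity)
        _ = 3 * C * (|r| ^ (2*β - 3) * (|r| ^ (3:ℕ) / r ^ 2)) := by rw [e3]; ring
        _ = 3 * C * (|r| ^ (2*β - 3) * |r|) := by rw [hcube]
        _ ≤ 26 * C * (|r| ^ (2*β - 3) * |r|) := by
            nlinarith [mul_nonneg (Real.rpow_nonneg (abs_nonneg r) (2*β - 3)) (abs_nonneg r),
              mul_nonneg hC.le (mul_nonneg (Real.rpow_nonneg (abs_nonneg r) (2*β - 3)) (abs_nonneg r))]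
    · rw [min_eq_right hcase]
      calc |((r - x) ^ 2 - y ^ 2) / (((r - x) ^ 2 + y ^ 2) ^ 2) - 1 / r ^ 2| * |w r|
          ≤ (26 * y / |r| ^ (3:ℕ)) * (C * |r| ^ (2 * β)) :=
            mul_le_mul (kb2 hxy hy hr) hwr (abs_nonneg _) (by positivity)
        _ = 26 * C * (|r| ^ (2*β - 3) * y) := by
            rw [e3]; field_simp

lemma measKw_aux (x y : ℝ) (w : ℝ → ℝ) (hw : Measurable w) :
    Measurable (fun r : ℝ => ((r - x) ^ 2 - y ^ 2) / (((r - x) ^ 2 + y ^ 2) ^ 2) * w r) := by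
  measurability

lemma measW2_aux (w : ℝ → ℝ) (hw : Measurable w) :
    Measurable (fun r : ℝ => w r / r ^ 2) := by
  measurability

end AuxConjDeriv

set_option maxHeartbeats 1000000 in
/-- If `|w(r)| ≤ C·(|r|^{2β} ∧ 1)` with `1/2 < β < 1`, and
`L = (1/π)∫ w(r)/r² dr`, then the `x`-derivative of the harmonic conjugate of the
Poisson extension of `w`, namely `∂_x u(x+iy) = (1/π)∫ ((r−x)²−y²)/((r−x)²+y²)²·w(r) dr`,
satisfies `|∂_x u(x+iy) − L| ≤ C₁·y^{2β−1}` on the cone `0 ≤ |x| ≤ y ≤ 1/2`. -/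
theorem conjugate_derivative_bound (C β : ℝ) (hC : 0 < C) (hβ0 : 1/2 < β)
    (hβ : β < 1) (w : ℝ → ℝ) (hw : Measurable w)
    (hbound : ∀ r : ℝ, |w r| ≤ C * min (|r| ^ (2 * β)) 1) :
    ∃ C₁ : ℝ, 0 < C₁ ∧ ∀ x y : ℝ, |x| ≤ y → y ≤ 1/2 → 0 < y →
      |(1 / π) * (∫ r : ℝ, ((r - x) ^ 2 - y ^ 2) / (((r - x) ^ 2 + y ^ 2) ^ 2) * w r)
        - (1 / π) * (∫ r : ℝ, w r / r ^ 2)| ≤ C₁ * y ^ (2 * β - 1) := by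
  have hb1 : (0:ℝ) < 2*β - 1 := by linarith
  have hb2 : (0:ℝ) < 2 - 2*β := by linarith
  have hcβ : (0:ℝ) < 1/(2*β - 1) + 1/(2 - 2*β) := by positivity
  refine ⟨52 * C * (1/(2*β - 1) + 1/(2 - 2*β)), by positivity, fun x y hxy hy2 hy => ?_⟩
  have hw0 : w 0 = 0 := by
    have := hbound 0
    rw [abs_zero, Real.zero_rpow (by intro h; linarith : (2*β : ℝ) ≠ 0)] at this
    simp at this
    exact abs_eq_zero.mp (le_antisymm (by simpa using this) (abs_nonneg _))
  -- integrable dominators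
  have hF2 : Integrable (fun r : ℝ => min (|r| ^ (2*β - 2)) (|r| ^ (-2:ℝ))) :=
    integrable_comp_abs' (f := fun t => min (t ^ (2*β - 2)) (t ^ (-2:ℝ)))
      (int_f2 (by linarith) (by norm_num))
  have hG : Integrable (fun r : ℝ => |r| ^ (2*β - 3) * min |r| y) :=
    integrable_comp_abs' (f := fun t => t ^ (2*β - 3) * min t y)
      (int_f1 (by linarith) (by linarith) hy)
  -- pointwise domination for the two integrands
  have domKw : ∀ r : ℝ, ‖((r - x) ^ 2 - y ^ 2) / (((r - x) ^ 2 + y ^ 2) ^ 2) * w r‖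
      ≤ 2 * C * min (|r| ^ (2*β - 2)) (|r| ^ (-2:ℝ)) := by
    intro r
    rw [Real.norm_eq_abs, abs_mul]
    rcases eq_or_ne r 0 with rfl | hr
    · have h0 : ((0:ℝ)) ^ (2*β - 2 : ℝ) = 0 := Real.zero_rpow (by intro h; linarith)
      have h0' : ((0:ℝ)) ^ (-2 : ℝ) = 0 := Real.zero_rpow (by norm_num)
      simp [hw0, h0, h0']
    · have habsr : (0:ℝ) < |r| := abs_pos.mpr hr
      have hr2 : (0:ℝ) < r ^ 2 := by positivity
      have hmin : min (|r| ^ (2 * β)) 1 / r ^ 2 = min (|r| ^ (2*β - 2)) (|r| ^ (-2:ℝ)) := by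
        have i1 : |r| ^ (2*β - 2) = |r| ^ (2 * β) / r ^ 2 := by
          rw [Real.rpow_sub habsr, show |r| ^ (2:ℝ) = r ^ 2 by
            rw [show (2:ℝ) = ((2:ℕ):ℝ) by norm_num, Real.rpow_natCast, sq_abs]]
        have i2 : |r| ^ (-2:ℝ) = 1 / r ^ 2 := by
          rw [show (-2:ℝ) = -((2:ℕ):ℝ) by norm_num, Real.rpow_neg (abs_nonneg r),
            Real.rpow_natCast, sq_abs, one_div]
        rw [i1, i2, ← min_div_div_right hr2.le]
      calc |((r - x) ^ 2 - y ^ 2) / (((r - x) ^ 2 + y ^ 2) ^ 2)| * |w r|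
          ≤ (2 / r ^ 2) * (C * min (|r| ^ (2 * β)) 1) :=
            mul_le_mul (kb0 hxy hy hr) (hbound r) (abs_nonneg _) (by positivity)
        _ = 2 * C * (min (|r| ^ (2 * β)) 1 / r ^ 2) := by ring
        _ = 2 * C * min (|r| ^ (2*β - 2)) (|r| ^ (-2:ℝ)) := by rw [hmin]
  have domW2 : ∀ r : ℝ, ‖w r / r ^ 2‖ ≤ C * min (|r| ^ (2*β - 2)) (|r| ^ (-2:ℝ)) := by
    intro r
    rw [Real.norm_eq_abs, abs_div, abs_of_nonneg (sq_nonneg r)]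
    rcases eq_or_ne r 0 with rfl | hr
    · have h0 : ((0:ℝ)) ^ (2*β - 2 : ℝ) = 0 := Real.zero_rpow (by intro h; linarith)
      have h0' : ((0:ℝ)) ^ (-2 : ℝ) = 0 := Real.zero_rpow (by norm_num)
      simp [hw0, h0, h0']
    · have habsr : (0:ℝ) < |r| := abs_pos.mpr hr
      have hr2 : (0:ℝ) < r ^ 2 := by positivity
      have hmin : min (|r| ^ (2 * β)) 1 / r ^ 2 = min (|r| ^ (2*β - 2)) (|r| ^ (-2:ℝ)) := by
        have i1 : |r| ^ (2*β - 2) = |r| ^ (2 * β) / r ^ 2 := by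
          rw [Real.rpow_sub habsr, show |r| ^ (2:ℝ) = r ^ 2 by
            rw [show (2:ℝ) = ((2:ℕ):ℝ) by norm_num, Real.rpow_natCast, sq_abs]]
        have i2 : |r| ^ (-2:ℝ) = 1 / r ^ 2 := by
          rw [show (-2:ℝ) = -((2:ℕ):ℝ) by norm_num, Real.rpow_neg (abs_nonneg r),
            Real.rpow_natCast, sq_abs, one_div]
        rw [i1, i2, ← min_div_div_right hr2.le]
      calc |w r| / r ^ 2 ≤ (C * min (|r| ^ (2 * β)) 1) / r ^ 2 := by
            gcongr; exact hbound r
        _ = C * (min (|r| ^ (2 * β)) 1 / r ^ 2) := by ring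
        _ = C * min (|r| ^ (2*β - 2)) (|r| ^ (-2:ℝ)) := by rw [hmin]
  have measKw : AEStronglyMeasurable
      (fun r : ℝ => ((r - x) ^ 2 - y ^ 2) / (((r - x) ^ 2 + y ^ 2) ^ 2) * w r) volume :=
    (measKw_aux x y w hw).aestronglyMeasurable
  have measW2 : AEStronglyMeasurable (fun r : ℝ => w r / r ^ 2) volume :=
    (measW2_aux w hw).aestronglyMeasurable
  have intKw : Integrable (fun r : ℝ => ((r - x) ^ 2 - y ^ 2) / (((r - x) ^ 2 + y ^ 2) ^ 2) * w r) :=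
    (hF2.const_mul (2 * C)).mono' measKw (ae_of_all _ domKw)
  have intW2 : Integrable (fun r : ℝ => w r / r ^ 2) :=
    (hF2.const_mul C).mono' measW2 (ae_of_all _ domW2)
  have hsub : (∫ r : ℝ, ((r - x) ^ 2 - y ^ 2) / (((r - x) ^ 2 + y ^ 2) ^ 2) * w r)
      - (∫ r : ℝ, w r / r ^ 2)
      = ∫ r : ℝ, (((r - x) ^ 2 - y ^ 2) / (((r - x) ^ 2 + y ^ 2) ^ 2) * w r - w r / r ^ 2) :=
    (integral_sub intKw intW2).symm
  have hpi : (0:ℝ) < 1 / π := by positivity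
  have hpile : 1 / π ≤ 1 := by
    rw [div_le_one Real.pi_pos]; linarith [Real.pi_gt_three]
  calc |(1 / π) * (∫ r : ℝ, ((r - x) ^ 2 - y ^ 2) / (((r - x) ^ 2 + y ^ 2) ^ 2) * w r)
        - (1 / π) * (∫ r : ℝ, w r / r ^ 2)|
      = (1 / π) * |(∫ r : ℝ, ((r - x) ^ 2 - y ^ 2) / (((r - x) ^ 2 + y ^ 2) ^ 2) * w r)
        - (∫ r : ℝ, w r / r ^ 2)| := by
        rw [← mul_sub, abs_mul, abs_of_pos hpi]
    _ ≤ 1 * |(∫ r : ℝ, ((r - x) ^ 2 - y ^ 2) / (((r - x) ^ 2 + y ^ 2) ^ 2) * w r)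
        - (∫ r : ℝ, w r / r ^ 2)| := by gcongr
    _ = |∫ r : ℝ, (((r - x) ^ 2 - y ^ 2) / (((r - x) ^ 2 + y ^ 2) ^ 2) * w r - w r / r ^ 2)| := by
        rw [one_mul, hsub]
    _ ≤ ∫ r : ℝ, |((r - x) ^ 2 - y ^ 2) / (((r - x) ^ 2 + y ^ 2) ^ 2) * w r - w r / r ^ 2| := by
        simpa [Real.norm_eq_abs] using
          norm_integral_le_integral_norm
            (fun r : ℝ => ((r - x) ^ 2 - y ^ 2) / (((r - x) ^ 2 + y ^ 2) ^ 2) * w r - w r / r ^ 2)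
    _ ≤ ∫ r : ℝ, 26 * C * (|r| ^ (2*β - 3) * min |r| y) := by
        refine integral_mono (intKw.sub intW2).abs (hG.const_mul _) ?_
        exact ptw hC hβ0 hβ hbound hw0 hxy hy
    _ = 26 * C * ∫ r : ℝ, |r| ^ (2*β - 3) * min |r| y := integral_const_mul _ _
    _ = 26 * C * (2 * ∫ t in Ioi (0:ℝ), t ^ (2*β - 3) * min t y) := by
        rw [integral_comp_abs (f := fun t => t ^ (2*β - 3) * min t y)]
    _ = 52 * C * (1/(2*β - 1) + 1/(2 - 2*β)) * y ^ (2*β - 1) := by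
        rw [int_f1_val hβ0 hβ hy]; ring
    _ = 52 * C * (1/(2*β - 1) + 1/(2 - 2*β)) * y ^ (2 * β - 1) := by norm_num
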